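/- The map 𝔭 defined by sending a sequence s = (s_α)_α to the family of polynomials 𝔭_{s,α}(t) solving the recursion ∂ₜ𝔭_{s,α}(t) = Σ_j α_j(α_j−1)𝔭_{s,α−2e_j}(t) with initial value s_α satisfies: (i) 𝔭_s(0) = s; (ii) 𝔭_{𝔭_s(t₁)}(t₂) = 𝔭_s(t₁+t₂) for all t₁,t₂ ∈ ℝ; (iii) 𝔭_{a·s + b·s'} = a·𝔭_s + b·𝔭_{s'} for all a,b ∈ ℝ and sequences s, s'. -/

import Mathlib

open Finset

/-- The heat moment polynomials: the unique solution of the recursion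
`∂ₜ 𝔭_{s,α}(t) = Σ_j α_j(α_j−1) 𝔭_{s,α−2e_j}(t)` with initial value `s_α`,
given by the explicit formula `e^{tΔ}` acting on the sequence. -/
noncomputable def fp {n : ℕ} (s : (Fin n → ℕ) → ℝ) (t : ℝ) (α : Fin n → ℕ) : ℝ :=
  ∑ β : (∀ i : Fin n, Fin (α i / 2 + 1)),
    (∏ i, ((α i).factorial : ℝ) /
        (((α i - 2 * (β i : ℕ)).factorial : ℝ) * (((β i : ℕ)).factorial : ℝ))) *
      s (fun i => α i - 2 * (β i : ℕ)) * t ^ (∑ i, (β i : ℕ))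

namespace FpAux

variable {n : ℕ}

/-- index set -/
def Paf (α : Fin n → ℕ) : Finset (Fin n → ℕ) :=
  Fintype.piFinset (fun i => Finset.range (α i / 2 + 1))

lemma mem_Paf {α β : Fin n → ℕ} : β ∈ Paf α ↔ ∀ i, β i ≤ α i / 2 := by
  simp [Paf, Fintype.mem_piFinset, Nat.lt_succ_iff]

/-- the coefficient -/
noncomputable def hco (α β : Fin n → ℕ) : ℝ :=
  ∏ i, ((α i).factorial : ℝ) /
    (((α i - 2 * β i).factorial : ℝ) * ((β i).factorial : ℝ))

/-- the Laplacian on sequences -/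
noncomputable def Dop (s : (Fin n → ℕ) → ℝ) (α : Fin n → ℕ) : ℝ :=
  ∑ j, ((α j : ℝ) * ((α j : ℝ) - 1)) * s (fun i => α i - if i = j then 2 else 0)

lemma fp_eq (s : (Fin n → ℕ) → ℝ) (t : ℝ) (α : Fin n → ℕ) :
    fp s t α = ∑ β ∈ Paf α, hco α β * s (fun i => α i - 2 * β i) * t ^ (∑ i, β i) := by
  rw [fp]
  refine Finset.sum_bij' (i := fun (β : ∀ i : Fin n, Fin (α i / 2 + 1)) _ => (fun i => (β i : ℕ)))
    (j := fun b hb => fun i => (⟨b i, by simpa using (Fintype.mem_piFinset.mp hb i)⟩ : Fin (α i / 2 + 1)))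
    ?_ ?_ ?_ ?_ ?_
  · intro β _
    simp only [Paf, Fintype.mem_piFinset, Finset.mem_range]
    exact fun i => (β i).isLt
  · intro b hb; exact Finset.mem_univ _
  · intro β _; rfl
  · intro b hb; rfl
  · intro β _; rfl

end FpAux

namespace Test
open FpAux
variable {n : ℕ}

lemma fac_id {a b : ℕ} (ha : 2 ≤ a) (hb : b ≤ (a-2)/2) :
    (a:ℝ) * ((a:ℝ)-1) * (((a-2).factorial : ℝ) / ((((a-2) - 2*b).factorial : ℝ) * ((b.factorial : ℝ))))
    = ((b:ℝ)+1) * ((a.factorial : ℝ) / (((a - 2*(b+1)).factorial : ℝ) * (((b+1).factorial : ℝ)))) := by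
  obtain ⟨c, rfl⟩ : ∃ c, a = c + 2 := ⟨a - 2, by omega⟩
  have h1 : c + 2 - 2*(b+1) = c - 2*b := by omega
  simp only [Nat.add_sub_cancel] at *
  rw [h1, Nat.factorial_succ (c+1), Nat.factorial_succ c, Nat.factorial_succ b]
  have hz1 : (((c - 2*b).factorial : ℝ)) ≠ 0 := Nat.cast_ne_zero.mpr (Nat.factorial_ne_zero _)
  have hz2 : ((b.factorial : ℝ)) ≠ 0 := Nat.cast_ne_zero.mpr (Nat.factorial_ne_zero _)
  have hz3 : ((b:ℝ)+1) ≠ 0 := by positivity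
  push_cast
  field_simp
  ring


lemma Dstep (k : ℕ) (s : (Fin n → ℕ) → ℝ) (α : Fin n → ℕ) (j : Fin n) :
    ((α j : ℝ) * ((α j : ℝ) - 1)) *
      ∑ β' ∈ Paf (fun i => α i - if i = j then 2 else 0),
        (if (∑ i, β' i) = k then (k.factorial : ℝ)
            * hco (fun i => α i - if i = j then 2 else 0) β' else 0) *
          s (fun i => (α i - if i = j then 2 else 0) - 2 * β' i)
    = ∑ β ∈ Paf α,
        (if (∑ i, β i) = k + 1 then (k.factorial : ℝ) * (β j : ℝ) * hco α β else 0) *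
          s (fun i => α i - 2 * β i) := by
  by_cases hαj : 2 ≤ α j
  · -- main case
    have hne : ∀ β ∈ Paf α,
        (if (∑ i, β i) = k + 1 then (k.factorial : ℝ) * (β j : ℝ) * hco α β else 0) *
          s (fun i => α i - 2 * β i) ≠ 0 → β j ≠ 0 := by
      intro β _ h hb
      apply h
      split_ifs <;> simp [hb]
    rw [← Finset.sum_filter_of_ne hne]
    rw [Finset.mul_sum]
    refine Finset.sum_bij'
      (i := fun (β' : Fin n → ℕ) _ => fun i => β' i + if i = j then 1 else 0)
      (j := fun (β : Fin n → ℕ) _ => fun i => β i - if i = j then 1 else 0)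
      ?_ ?_ ?_ ?_ ?_
    · intro β' hβ'
      rw [mem_Paf] at hβ'
      simp only [Finset.mem_filter, mem_Paf]
      refine ⟨fun i => ?_, by simp⟩
      by_cases hij : i = j
      · subst hij; have := hβ' i; simp only [if_pos rfl, if_true] at this ⊢; omega
      · have := hβ' i; simp only [if_neg hij] at this ⊢; omega
    · intro β hβ
      simp only [Finset.mem_filter, mem_Paf] at hβ
      rw [mem_Paf]
      intro i
      by_cases hij : i = j
      · subst hij; have h1 := hβ.1 i; have h2 := hβ.2
        simp only [if_pos rfl, if_true]; omega
      · have := hβ.1 i; simp only [if_neg hij]; omega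
    · intro β' hβ'
      funext i; by_cases hij : i = j <;> simp [hij]
    · intro β hβ
      simp only [Finset.mem_filter] at hβ
      funext i
      by_cases hij : i = j
      · subst hij; simp only [if_pos rfl, if_true]; have := hβ.2; omega
      · simp [hij]
    · intro β' hβ'
      dsimp only
      rw [mem_Paf] at hβ'
      have hsum : (∑ i, (β' i + if i = j then 1 else 0)) = (∑ i, β' i) + 1 := by
        rw [Finset.sum_add_distrib, Finset.sum_ite_eq' Finset.univ j (fun _ => 1)]
        simp
      have hsarg : (fun i => (α i - if i = j then 2 else 0) - 2 * β' i)
          = (fun i => α i - 2 * (β' i + if i = j then 1 else 0)) := by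
        funext i; by_cases hij : i = j
        · subst hij; simp only [if_pos rfl, if_true]; omega
        · simp [hij]
      have hbj : β' j ≤ (α j - 2)/2 := by
        have := hβ' j; simpa using this
      have hcoeff : ((α j : ℝ) * ((α j : ℝ) - 1)) *
          hco (fun i => α i - if i = j then 2 else 0) β'
          = ((β' j : ℝ) + 1) * hco α (fun i => β' i + if i = j then 1 else 0) := by
        unfold hco
        rw [Finset.prod_eq_mul_prod_sdiff_singleton_of_mem (Finset.mem_univ j),
          Finset.prod_eq_mul_prod_sdiff_singleton_of_mem (Finset.mem_univ j)
            (f := fun i => ((α i).factorial : ℝ) /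
              (((α i - 2 * (β' i + if i = j then 1 else 0)).factorial : ℝ)
                * (((β' i + if i = j then 1 else 0).factorial : ℝ))))]
        have hrest : ∀ i ∈ Finset.univ \ {j},
            ((α i - if i = j then 2 else 0).factorial : ℝ) /
              ((((α i - if i = j then 2 else 0) - 2 * β' i).factorial : ℝ)
                * ((β' i).factorial : ℝ))
            = ((α i).factorial : ℝ) /
              (((α i - 2 * (β' i + if i = j then 1 else 0)).factorial : ℝ)
                * (((β' i + if i = j then 1 else 0).factorial : ℝ))) := by
          intro i hi
          simp only [Finset.mem_sdiff, Finset.mem_singleton] at hi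
          simp [hi.2]
        rw [Finset.prod_congr rfl hrest]
        have hj := fac_id hαj hbj
        simp only [if_pos rfl, if_true]
        rw [← mul_assoc, hj, mul_assoc]
      rw [hsum, hsarg]
      by_cases hk : (∑ i, β' i) = k
      · rw [if_pos hk, if_pos (by omega)]
        simp only [if_pos rfl, if_true]
        push_cast
        linear_combination (k.factorial : ℝ) *
          s (fun i => α i - 2 * (β' i + if i = j then 1 else 0)) * hcoeff
      · rw [if_neg hk, if_neg (by omega)]
        simp
  · -- degenerate case: α j ≤ 1
    have hc : ((α j : ℝ) * ((α j : ℝ) - 1)) = 0 := by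
      interval_cases h : (α j) <;> norm_num
    rw [hc, zero_mul]
    refine (Finset.sum_eq_zero ?_).symm
    intro β hβ
    rw [mem_Paf] at hβ
    have : β j = 0 := by have := hβ j; omega
    split_ifs <;> simp [this]


lemma D_iter (k : ℕ) (s : (Fin n → ℕ) → ℝ) (α : Fin n → ℕ) :
    (Dop^[k] s) α = ∑ β ∈ Paf α,
      (if (∑ i, β i) = k then (k.factorial : ℝ) * hco α β else 0) *
        s (fun i => α i - 2 * β i) := by
  induction k generalizing α with
  | zero =>
    have h0 : (fun _ : Fin n => 0) ∈ Paf α := mem_Paf.mpr (fun i => Nat.zero_le _)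
    rw [Function.iterate_zero_apply]
    rw [Finset.sum_eq_single_of_mem _ h0]
    · have hP : (∏ x : Fin n, ((α x).factorial:ℝ)) ≠ 0 := by positivity
      simp [hco, div_self hP]
    · intro b hb hne
      rw [if_neg, zero_mul]
      intro hs
      exact hne (funext fun i => by
        have := Finset.sum_eq_zero_iff.mp hs i (Finset.mem_univ i); simpa using this)
  | succ k ih =>
    rw [Function.iterate_succ_apply']
    show ∑ j, ((α j : ℝ) * ((α j : ℝ) - 1)) *
        (Dop^[k] s) (fun i => α i - if i = j then 2 else 0) = _
    have : ∀ j : Fin n, ((α j : ℝ) * ((α j : ℝ) - 1)) *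
        (Dop^[k] s) (fun i => α i - if i = j then 2 else 0)
        = ∑ β ∈ Paf α,
          (if (∑ i, β i) = k + 1 then (k.factorial : ℝ) * (β j : ℝ) * hco α β else 0) *
            s (fun i => α i - 2 * β i) := by
      intro j
      rw [ih]
      exact Dstep k s α j
    rw [Finset.sum_congr rfl (fun j _ => this j)]
    rw [Finset.sum_comm]
    refine Finset.sum_congr rfl (fun β hβ => ?_)
    rw [← Finset.sum_mul]
    congr 1
    by_cases hc : (∑ i, β i) = k + 1
    · simp only [if_pos hc]
      have h2 : ∀ x : Fin n, (k.factorial:ℝ) * (β x :ℝ) * hco α β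
          = ((k.factorial:ℝ) * hco α β) * (β x:ℝ) := fun x => by ring
      rw [Finset.sum_congr rfl (fun x _ => h2 x), ← Finset.mul_sum,
        ← Nat.cast_sum, hc, Nat.factorial_succ]
      push_cast; ring
    · simp [hc]


lemma sum_le_half (α : Fin n → ℕ) {β : Fin n → ℕ} (hβ : β ∈ Paf α) :
    (∑ i, β i) ≤ ∑ i, α i / 2 :=
  Finset.sum_le_sum (fun i _ => mem_Paf.mp hβ i)

lemma D_vanish (k : ℕ) (s : (Fin n → ℕ) → ℝ) (α : Fin n → ℕ)
    (hk : (∑ i, α i / 2) < k) : (Dop^[k] s) α = 0 := by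
  rw [D_iter]
  refine Finset.sum_eq_zero fun β hβ => ?_
  rw [if_neg, zero_mul]
  exact fun h => absurd (h ▸ sum_le_half α hβ) (by omega)

lemma fp_sum (s : (Fin n → ℕ) → ℝ) (t : ℝ) (α : Fin n → ℕ) {M : ℕ}
    (hM : (∑ i, α i / 2) < M) :
    fp s t α = ∑ k ∈ Finset.range M, t^k / (k.factorial : ℝ) * (Dop^[k] s) α := by
  rw [fp_eq]
  have hrw : ∀ k ∈ Finset.range M, t^k / (k.factorial : ℝ) * (Dop^[k] s) α
      = ∑ β ∈ Paf α, (if (∑ i, β i) = k then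
          t^k / (k.factorial : ℝ) * ((k.factorial : ℝ) * hco α β *
            s (fun i => α i - 2 * β i)) else 0) := by
    intro k _
    rw [D_iter, Finset.mul_sum]
    refine Finset.sum_congr rfl fun β _ => ?_
    split_ifs <;> ring
  rw [Finset.sum_congr rfl hrw, Finset.sum_comm]
  refine Finset.sum_congr rfl fun β hβ => ?_
  have hmem : (∑ i, β i) ∈ Finset.range M :=
    Finset.mem_range.mpr (lt_of_le_of_lt (sum_le_half α hβ) hM)
  rw [Finset.sum_ite_eq (Finset.range M) (∑ i, β i), if_pos hmem]
  have hz : ((∑ i, β i).factorial : ℝ) ≠ 0 := Nat.cast_ne_zero.mpr (Nat.factorial_ne_zero _)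
  field_simp

lemma M_aux (α : Fin n → ℕ) (j : Fin n) :
    (∑ i, (α i - if i = j then 2 else 0) / 2) ≤ ∑ i, α i / 2 :=
  Finset.sum_le_sum (fun i _ => Nat.div_le_div_right (Nat.sub_le _ _))

lemma D_fp (s : (Fin n → ℕ) → ℝ) (t : ℝ) (α : Fin n → ℕ) :
    Dop (fp s t) α = fp (Dop s) t α := by
  set M := (∑ i, α i / 2) + 1 with hMdef
  have hM : (∑ i, α i / 2) < M := by omega
  show (∑ j, ((α j : ℝ) * ((α j : ℝ) - 1)) *
      fp s t (fun i => α i - if i = j then 2 else 0)) = _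
  have h1 : ∀ j : Fin n, ((α j : ℝ) * ((α j : ℝ) - 1)) *
      fp s t (fun i => α i - if i = j then 2 else 0)
      = ∑ k ∈ Finset.range M, t^k / (k.factorial : ℝ) *
          (((α j : ℝ) * ((α j : ℝ) - 1)) *
            (Dop^[k] s) (fun i => α i - if i = j then 2 else 0)) := by
    intro j
    rw [fp_sum s t _ (lt_of_le_of_lt (M_aux α j) hM), Finset.mul_sum]
    exact Finset.sum_congr rfl fun k _ => by ring
  rw [Finset.sum_congr rfl (fun j _ => h1 j), Finset.sum_comm]
  rw [fp_sum (Dop s) t α hM]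
  refine Finset.sum_congr rfl fun k _ => ?_
  rw [← Finset.mul_sum]
  congr 1
  show Dop (Dop^[k] s) α = _
  rw [← Function.iterate_succ_apply' Dop k s, Function.iterate_succ_apply Dop k s]

lemma Dk_fp (k : ℕ) (s : (Fin n → ℕ) → ℝ) (t : ℝ) :
    Dop^[k] (fp s t) = fp (Dop^[k] s) t := by
  induction k generalizing s with
  | zero => rfl
  | succ k ih =>
    rw [Function.iterate_succ_apply, Function.iterate_succ_apply]
    rw [show Dop (fp s t) = fp (Dop s) t from funext (D_fp s t)]
    exact ih (Dop s)


lemma prop2 (s : (Fin n → ℕ) → ℝ) (α : Fin n → ℕ) : fp s 0 α = s α := by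
  rw [fp_sum s 0 α (show (∑ i, α i / 2) < (∑ i, α i / 2) + 1 by omega)]
  rw [Finset.sum_eq_single 0]
  · simp
  · intro k _ hk; simp [zero_pow hk]
  · simp

lemma prop4 (a b : ℝ) (s s' : (Fin n → ℕ) → ℝ) (t : ℝ) (α : Fin n → ℕ) :
    fp (fun β => a * s β + b * s' β) t α = a * fp s t α + b * fp s' t α := by
  simp only [fp, Finset.mul_sum, ← Finset.sum_add_distrib]
  exact Finset.sum_congr rfl fun β _ => by ring

lemma prop1 (s : (Fin n → ℕ) → ℝ) (α : Fin n → ℕ) (t : ℝ) :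
    HasDerivAt (fun τ : ℝ => fp s τ α)
      (∑ j : Fin n, (α j : ℝ) * ((α j : ℝ) - 1) *
        fp s t (fun i => α i - if i = j then 2 else 0)) t := by
  set M0 := ∑ i, α i / 2 with hM0
  have key : (fun τ : ℝ => fp s τ α)
      = fun τ => ∑ k ∈ Finset.range (M0+2), ((Dop^[k] s) α / (k.factorial:ℝ)) * τ^k := by
    funext τ
    rw [fp_sum s τ α (show M0 < M0+2 by omega)]
    exact Finset.sum_congr rfl fun k _ => by ring
  rw [key]
  have hder := HasDerivAt.fun_sum (fun k (_ : k ∈ Finset.range (M0+2)) =>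
    (hasDerivAt_pow k t).const_mul ((Dop^[k] s) α / (k.factorial:ℝ)))
  refine hder.congr_deriv (Eq.symm ?_)
  have hL : (∑ j : Fin n, (α j : ℝ) * ((α j : ℝ) - 1) *
        fp s t (fun i => α i - if i = j then 2 else 0))
      = ∑ k ∈ Finset.range (M0+1), t^k / (k.factorial:ℝ) * (Dop^[k] (Dop s)) α := by
    show Dop (fp s t) α = _
    rw [D_fp, fp_sum (Dop s) t α (show M0 < M0+1 by omega)]
  rw [hL]
  conv_rhs => rw [Finset.sum_range_succ']
  have h0 : ((Dop^[0] s) α / ((Nat.factorial 0 : ℕ):ℝ)) * ((0:ℕ) * t ^ (0-1)) = 0 := by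
    simp
  rw [h0, add_zero]
  refine Finset.sum_congr rfl fun k _ => ?_
  rw [← Function.iterate_succ_apply Dop k s]
  have hz : ((k.factorial : ℕ):ℝ) ≠ 0 := Nat.cast_ne_zero.mpr (Nat.factorial_ne_zero _)
  rw [Nat.factorial_succ]
  push_cast
  have hk1 : ((k:ℝ) + 1) ≠ 0 := by positivity
  field_simp


lemma prop3 (s : (Fin n → ℕ) → ℝ) (t₁ t₂ : ℝ) (α : Fin n → ℕ) :
    fp (fp s t₁) t₂ α = fp s (t₁ + t₂) α := by
  set M0 := ∑ i, α i / 2 with hM0def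
  have hM : M0 < M0 + 1 := by omega
  rw [fp_sum (fp s t₁) t₂ α hM, fp_sum s (t₁+t₂) α hM]
  have h1 : ∀ k ∈ Finset.range (M0+1), t₂^k/(k.factorial:ℝ) * (Dop^[k] (fp s t₁)) α
      = ∑ m ∈ Finset.range (M0+1),
          t₂^k/(k.factorial:ℝ) * (t₁^m/(m.factorial:ℝ) * (Dop^[m+k] s) α) := by
    intro k _
    rw [Dk_fp, fp_sum (Dop^[k] s) t₁ α hM, Finset.mul_sum]
    refine Finset.sum_congr rfl fun m _ => ?_
    rw [Function.iterate_add_apply]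
  have h2 : ∀ N ∈ Finset.range (M0+1), (t₁+t₂)^N/(N.factorial:ℝ) * (Dop^[N] s) α
      = ∑ m ∈ Finset.range (N+1),
          t₂^(N-m)/((N-m).factorial:ℝ) * (t₁^m/(m.factorial:ℝ) * (Dop^[m+(N-m)] s) α) := by
    intro N _
    rw [add_pow, Finset.sum_div, Finset.sum_mul]
    refine Finset.sum_congr rfl fun m hm => ?_
    have hmN : m ≤ N := Nat.lt_succ_iff.mp (Finset.mem_range.mp hm)
    rw [show m + (N - m) = N by omega, Nat.cast_choose ℝ hmN]
    have hz1 : ((m.factorial:ℕ):ℝ) ≠ 0 := Nat.cast_ne_zero.mpr (Nat.factorial_ne_zero _)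
    have hz2 : (((N-m).factorial:ℕ):ℝ) ≠ 0 := Nat.cast_ne_zero.mpr (Nat.factorial_ne_zero _)
    have hz3 : ((N.factorial:ℕ):ℝ) ≠ 0 := Nat.cast_ne_zero.mpr (Nat.factorial_ne_zero _)
    field_simp
  rw [Finset.sum_congr rfl h1, Finset.sum_congr rfl h2]
  rw [← Finset.sum_product',
    Finset.sum_sigma' (Finset.range (M0+1)) (fun N => Finset.range (N+1))
      (fun N m => t₂^(N-m)/((N-m).factorial:ℝ)
        * (t₁^m/(m.factorial:ℝ) * (Dop^[m+(N-m)] s) α))]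
  have hvan : ∀ p : ℕ × ℕ, ¬ (p.1 + p.2 ≤ M0) →
      t₂^p.1/((p.1).factorial:ℝ) * (t₁^p.2/((p.2).factorial:ℝ) * (Dop^[p.2+p.1] s) α) = 0 := by
    intro p hp
    rw [D_vanish _ s α (by omega), mul_zero, mul_zero]
  rw [← Finset.sum_filter_of_ne (p := fun p : ℕ × ℕ => p.1 + p.2 ≤ M0)
    (fun p _ h => by by_contra hc; exact h (hvan p hc))]
  refine Finset.sum_bij'
    (i := fun (p : ℕ × ℕ) _ => (⟨p.1 + p.2, p.2⟩ : Σ _ : ℕ, ℕ))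
    (j := fun (q : Σ _ : ℕ, ℕ) _ => ((q.1 - q.2, q.2) : ℕ × ℕ))
    ?_ ?_ ?_ ?_ ?_
  · intro p hp
    simp only [Finset.mem_filter, Finset.mem_product, Finset.mem_range] at hp
    simp only [Finset.mem_sigma, Finset.mem_range]
    omega
  · intro q hq
    simp only [Finset.mem_sigma, Finset.mem_range] at hq
    simp only [Finset.mem_filter, Finset.mem_product, Finset.mem_range]
    omega
  · intro p hp
    simp only [Nat.add_sub_cancel]
  · intro q hq
    simp only [Finset.mem_sigma, Finset.mem_range] at hq
    ext
    · simp; omega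
    · simp
  · intro p hp
    simp only [Nat.add_sub_cancel]

end Test


/-- `𝔭` solves the heat moment recursion with initial value `s` and satisfies:
(i) `𝔭_s(0) = s`; (ii) `𝔭_{𝔭_s(t₁)}(t₂) = 𝔭_s(t₁+t₂)`; (iii) linearity in `s`. -/
theorem fp_properties (n : ℕ) :
    (∀ (s : (Fin n → ℕ) → ℝ) (α : Fin n → ℕ) (t : ℝ),
      HasDerivAt (fun τ : ℝ => fp s τ α)
        (∑ j : Fin n, (α j : ℝ) * ((α j : ℝ) - 1) *
          fp s t (fun i => α i - if i = j then 2 else 0)) t) ∧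
    (∀ (s : (Fin n → ℕ) → ℝ) (α : Fin n → ℕ), fp s 0 α = s α) ∧
    (∀ (s : (Fin n → ℕ) → ℝ) (t₁ t₂ : ℝ) (α : Fin n → ℕ),
      fp (fp s t₁) t₂ α = fp s (t₁ + t₂) α) ∧
    (∀ (a b : ℝ) (s s' : (Fin n → ℕ) → ℝ) (t : ℝ) (α : Fin n → ℕ),
      fp (fun β => a * s β + b * s' β) t α = a * fp s t α + b * fp s' t α) :=
  ⟨fun s α t => Test.prop1 s α t, fun s α => Test.prop2 s α,
   fun s t₁ t₂ α => Test.prop3 s t₁ t₂ α,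
   fun a b s s' t α => Test.prop4 a b s s' t α⟩
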